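/- For every n ∈ ℕ with n ≥ 3, the cycle graph C_n on n vertices satisfies ffn(C_n) = 3. -/

import Mathlib

open scoped Classical
noncomputable section

variable {V : Type*}

/-- The neighbourhood of a set of vertices: all vertices outside `S` adjacent to some
vertex of `S`. -/
def nbhd [Fintype V] (G : SimpleGraph V) (S : Finset V) : Finset V :=
  Finset.univ.filter fun v => v ∉ S ∧ ∃ u ∈ S, G.Adj u v

/-- The burning sets of a strategy `F` (where `F i` is the firefighter set at time `i`):
`B 0 = V` and `B (t+1) = (B t \ F (t+1)) ∪ N(B t \ F (t+1))`. -/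
def burn [Fintype V] (G : SimpleGraph V) (F : ℕ → Finset V) : ℕ → Finset V
  | 0 => Finset.univ
  | t + 1 => (burn G F t \ F (t + 1)) ∪ nbhd G (burn G F t \ F (t + 1))

/-- `F` is a `T`-winning `m`-strategy for `G`. -/
def WinningStrategy [Fintype V] (G : SimpleGraph V) (m T : ℕ) (F : ℕ → Finset V) : Prop :=
  (∀ i, (F i).card ≤ m) ∧ burn G F T = ∅

/-- The firefighter number of `G`: the least `m` admitting a winning `m`-strategy. -/
def ffn [Fintype V] (G : SimpleGraph V) : ℕ :=
  sInf {m | ∃ T F, WinningStrategy G m T F}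

open Fin.NatCast Fin.CommRing

lemma fin_two_ne_zero (k : ℕ) : (2 : Fin (k+3)) ≠ 0 := by
  simp [Fin.ext_iff, Fin.val_two]
  rw [Nat.mod_eq_of_lt (by omega)]; omega

lemma fin_one_ne_zero (k : ℕ) : (1 : Fin (k+3)) ≠ 0 := by
  simp [Fin.ext_iff, Nat.mod_eq_of_lt]

/-- With at most two firefighters per round, the whole cycle keeps burning. -/
lemma burn_univ_of_card_le_two (k : ℕ) (F : ℕ → Finset (Fin (k+3)))
    (hF : ∀ i, (F i).card ≤ 2) (t : ℕ) :
    burn (SimpleGraph.cycleGraph (k+3)) F t = Finset.univ := by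
  induction t with
  | zero => rfl
  | succ t ih =>
    rw [burn, ih]
    ext v
    simp only [Finset.mem_union, Finset.mem_sdiff, Finset.mem_univ, true_and, nbhd,
      Finset.mem_filter, iff_true]
    by_cases hv : v ∈ F (t+1)
    · right
      refine ⟨fun h => h hv, ?_⟩
      have hne : v - 1 ≠ v + 1 := fun h => fin_two_ne_zero k (by linear_combination -h)
      have hne1 : v - 1 ≠ v := fun h => fin_one_ne_zero k (by linear_combination -h)
      have hne2 : v + 1 ≠ v := fun h => fin_one_ne_zero k (by linear_combination h)
      have hkey : v - 1 ∉ F (t+1) ∨ v + 1 ∉ F (t+1) := by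
        by_contra h
        push_neg at h
        have hsub : ({v - 1, v + 1, v} : Finset (Fin (k+3))) ⊆ F (t+1) := by
          intro x hx
          simp only [Finset.mem_insert, Finset.mem_singleton] at hx
          rcases hx with rfl | rfl | rfl
          · exact h.1
          · exact h.2
          · exact hv
        have hcard : ({v - 1, v + 1, v} : Finset (Fin (k+3))).card = 3 := by
          rw [Finset.card_insert_of_notMem (by simp [hne, hne1]),
            Finset.card_insert_of_notMem (by simp [hne2]), Finset.card_singleton]
        have h1 := Finset.card_le_card hsub
        have h2 := hF (t+1)
        omega
      have hadj1 : (SimpleGraph.cycleGraph (k+3)).Adj (v - 1) v :=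
        SimpleGraph.cycleGraph_adj.2 (Or.inr (by ring))
      have hadj2 : (SimpleGraph.cycleGraph (k+3)).Adj (v + 1) v :=
        SimpleGraph.cycleGraph_adj.2 (Or.inl (by ring))
      rcases hkey with h | h
      · exact ⟨v - 1, h, hadj1⟩
      · exact ⟨v + 1, h, hadj2⟩
    · left; exact hv

/-- The sweeping strategy for the cycle on `k+3` vertices. -/
def stratF (k i : ℕ) : Finset (Fin (k+3)) := {(↑(i-1) : Fin (k+3)), ↑i, ↑(k+2)}

lemma stratF_card (k i : ℕ) : (stratF k i).card ≤ 3 := by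
  have h1 := Finset.card_insert_le ((↑(i-1) : Fin (k+3))) ({↑i, ↑(k+2)} : Finset (Fin (k+3)))
  have h2 := Finset.card_insert_le ((↑i : Fin (k+3))) ({↑(k+2)} : Finset (Fin (k+3)))
  simp only [Finset.card_singleton] at h2
  calc (stratF k i).card ≤ _ + 1 := h1
    _ ≤ 3 := by omega

lemma mem_stratF (k i : ℕ) (hi : i ≤ k + 2) (v : Fin (k+3)) :
    v ∈ stratF k i ↔ (v.val = i - 1 ∨ v.val = i ∨ v.val = k + 2) := by
  simp only [stratF, Finset.mem_insert, Finset.mem_singleton, Fin.ext_iff,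
    Fin.val_natCast]
  rw [Nat.mod_eq_of_lt (by omega), Nat.mod_eq_of_lt (by omega), Nat.mod_eq_of_lt (by omega)]

lemma fin_val_add_one {k : ℕ} (v : Fin (k+3)) (h : v.val < k + 2) : (v + 1).val = v.val + 1 := by
  rw [Fin.val_add_one, if_neg]
  intro hl
  rw [hl] at h
  simp [Fin.last] at h

lemma fin_val_sub_one {k : ℕ} (v : Fin (k+3)) (h : v.val ≠ 0) : (v - 1).val = v.val - 1 := by
  rw [Fin.coe_sub_one, if_neg]
  intro hl
  rw [hl] at h
  simp at h

lemma burn_arc (k : ℕ) (t : ℕ) (ht : t ≤ k) :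
    burn (SimpleGraph.cycleGraph (k+3)) (stratF k) t
      = Finset.univ.filter (fun v => t ≤ v.val) := by
  induction t with
  | zero => ext v; simp [burn]
  | succ t ih =>
    have ht' : t ≤ k := Nat.le_of_succ_le ht
    rw [burn, ih ht']
    ext v
    have hv3 := v.isLt
    simp only [Finset.mem_union, Finset.mem_sdiff, nbhd, Finset.mem_filter, Finset.mem_univ,
      true_and, mem_stratF k (t+1) (by omega), not_or]
    constructor
    · rintro (⟨h1, h2, h3, h4⟩ | ⟨_, u, ⟨⟨hu1, hu2, hu3, hu4⟩, hadj⟩⟩)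
      · omega
      · have hu5 := u.isLt
        rcases SimpleGraph.cycleGraph_adj.1 hadj with h | h
        · have hveq : v = u - 1 := by linear_combination -h
          have := fin_val_sub_one u (by omega)
          rw [hveq, this]
          omega
        · have hveq : v = u + 1 := by linear_combination h
          have := fin_val_add_one u (by omega)
          rw [hveq, this]
          omega
    · intro hv
      by_cases hc : t + 2 ≤ v.val ∧ v.val ≤ k + 1
      · left; omega
      · right
        have hcase : v.val = t + 1 ∨ v.val = k + 2 := by omega
        refine ⟨by omega, ?_⟩
        rcases hcase with hcase | hcase
        · have hval := fin_val_add_one v (by omega)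
          refine ⟨v + 1, ⟨⟨?_, ?_, ?_, ?_⟩, ?_⟩⟩ <;>
            first
              | omega
              | exact SimpleGraph.cycleGraph_adj.2 (Or.inl (by ring))
        · have hval := fin_val_sub_one v (by omega)
          refine ⟨v - 1, ⟨⟨?_, ?_, ?_, ?_⟩, ?_⟩⟩ <;>
            first
              | omega
              | exact SimpleGraph.cycleGraph_adj.2 (Or.inr (by ring))

lemma burn_win (k : ℕ) :
    burn (SimpleGraph.cycleGraph (k+3)) (stratF k) (k+1) = ∅ := by
  rw [burn, burn_arc k k le_rfl]
  ext v
  have hv3 := v.isLt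
  simp only [Finset.mem_union, Finset.mem_sdiff, nbhd, Finset.mem_filter, Finset.mem_univ,
    true_and, mem_stratF k (k+1) (by omega), not_or, Finset.notMem_empty, iff_false]
  constructor
  · rintro ⟨h1, h2, h3, h4⟩; omega
  · rintro ⟨-, u, ⟨hu1, hu2, hu3, hu4⟩, -⟩
    have := u.isLt; omega

/-- The firefighter number of the cycle graph `C_n` (with `n ≥ 3`) is `3`. -/
theorem ffn_cycleGraph (n : ℕ) (hn : 3 ≤ n) :
    ffn (SimpleGraph.cycleGraph n) = 3 := by
  obtain ⟨k, rfl⟩ : ∃ k, n = k + 3 := ⟨n - 3, by omega⟩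
  have hmem : 3 ∈ {m | ∃ T F, WinningStrategy (SimpleGraph.cycleGraph (k+3)) m T F} :=
    ⟨k + 1, stratF k, fun i => stratF_card k i, burn_win k⟩
  refine le_antisymm (Nat.sInf_le hmem) (le_csInf ⟨3, hmem⟩ ?_)
  rintro m ⟨T, F, hc, hb⟩
  by_contra h
  push_neg at h
  have h2 : ∀ i, (F i).card ≤ 2 := fun i => (hc i).trans (by omega)
  have := burn_univ_of_card_le_two k F h2 T
  rw [hb] at this
  exact absurd this.symm (Finset.univ_nonempty.ne_empty)

end
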